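/- In the setting of the previous functions γ_min, γ_max on S¹ (defined from palindromic coprime A, B with P̃A + Q̃B = 1, where for every z ∈ S¹ at least one of A(z), B(z) is positive): the functions z ↦ arctan(γ_max(z)) and z ↦ arctan(γ_min(z)) from S¹ to [−π/2, π/2] are continuous, where arctan(+∞) := π/2 and arctan(−∞) := −π/2. -/

import Mathlib

open LaurentPolynomial Real

noncomputable def lEval (p : LaurentPolynomial ℝ) (z : ℂ) : ℂ :=
  Finsupp.sum p.coeff fun n a => (a : ℂ) * z ^ n

def Palindromic (p : LaurentPolynomial ℝ) : Prop := invert p = p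

/-- `arctan(γ_max(z))`, where `γ_max(z) = P̃(z)/B(z)` if `B(z) > 0` and `+∞`
(so `arctan` of it equals `π/2`) otherwise. -/
noncomputable def arctanGammaMax (Pt B : LaurentPolynomial ℝ) (z : ℂ) : ℝ :=
  if 0 < (lEval B z).re then Real.arctan ((lEval Pt z).re / (lEval B z).re) else π / 2

/-- `arctan(γ_min(z))`, where `γ_min(z) = -Q̃(z)/A(z)` if `A(z) > 0` and `-∞`
(so `arctan` of it equals `-π/2`) otherwise. -/
noncomputable def arctanGammaMin (Qt A : LaurentPolynomial ℝ) (z : ℂ) : ℝ :=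
  if 0 < (lEval A z).re then Real.arctan (-(lEval Qt z).re / (lEval A z).re) else -(π / 2)

/-- The evaluation ring homomorphism at a nonzero complex number. -/
noncomputable def evalRH (z : ℂ) (hz : z ≠ 0) : LaurentPolynomial ℝ →+* ℂ :=
  AddMonoidAlgebra.liftNCRingHom (algebraMap ℝ ℂ)
    ((Units.coeHom ℂ).comp (zpowersHom ℂˣ (Units.mk0 z hz)))
    (fun _ _ => Commute.all _ _)

lemma lEval_eq_evalRH (p : LaurentPolynomial ℝ) (z : ℂ) (hz : z ≠ 0) :
    lEval p z = evalRH z hz p := by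
  induction p using AddMonoidAlgebra.induction_linear with
  | zero => simp [lEval, Finsupp.sum_zero_index]
  | add f g hf hg =>
      rw [map_add, ← hf, ← hg, lEval, lEval, lEval, AddMonoidAlgebra.coeff_add,
        Finsupp.sum_add_index (by simp) (by intro n _ a b; push_cast; ring)]
  | single n a =>
      show lEval (AddMonoidAlgebra.single n a) z = _
      rw [lEval, AddMonoidAlgebra.coeff_single, Finsupp.sum_single_index (by simp)]
      show (a : ℂ) * z ^ n =
        AddMonoidAlgebra.liftNC ((algebraMap ℝ ℂ) : ℝ →+ ℂ)
          ((Units.coeHom ℂ).comp (zpowersHom ℂˣ (Units.mk0 z hz))) (AddMonoidAlgebra.single n a)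
      rw [AddMonoidAlgebra.liftNC_single]
      simp [zpowersHom_apply, Units.val_zpow_eq_zpow_val]

lemma lEval_bezout {A B Pt Qt : LaurentPolynomial ℝ} (hbez : Pt * A + Qt * B = 1)
    (z : ℂ) (hz : z ≠ 0) :
    lEval Pt z * lEval A z + lEval Qt z * lEval B z = 1 := by
  simp only [lEval_eq_evalRH _ z hz, ← map_mul, ← map_add, hbez, map_one]

lemma lEval_invert (p : LaurentPolynomial ℝ) (z : ℂ) :
    lEval (invert p) z = lEval p z⁻¹ := by
  have h : (invert p).coeff = Finsupp.mapDomain Neg.neg p.coeff := by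
    ext n
    rw [invert_apply]
    conv_rhs => rw [show n = Neg.neg (-n) from (neg_neg n).symm]
    rw [Finsupp.mapDomain_apply neg_injective]
  rw [lEval, h, Finsupp.sum_mapDomain_index_inj neg_injective, lEval]
  refine Finsupp.sum_congr fun n _ => ?_
  rw [show Neg.neg n = -n from rfl, zpow_neg, inv_zpow]

lemma lEval_conj (p : LaurentPolynomial ℝ) (z : ℂ) :
    (starRingEnd ℂ) (lEval p z) = lEval p ((starRingEnd ℂ) z) := by
  rw [lEval, map_finsuppSum, lEval]
  refine Finsupp.sum_congr fun n _ => ?_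
  rw [map_mul, map_zpow₀, Complex.conj_ofReal]

lemma lEval_real {p : LaurentPolynomial ℝ} (hp : Palindromic p) {z : ℂ}
    (hz : ‖z‖ = 1) : (lEval p z).im = 0 := by
  have habs : ‖z‖ = 1 := hz
  have hconj : (starRingEnd ℂ) z = z⁻¹ := (Complex.inv_eq_conj habs).symm
  have : (starRingEnd ℂ) (lEval p z) = lEval p z := by
    rw [lEval_conj, hconj, ← lEval_invert, hp]
  exact Complex.conj_eq_iff_im.mp this

lemma lEval_continuousAt (p : LaurentPolynomial ℝ) {z : ℂ} (hz : z ≠ 0) :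
    ContinuousAt (fun w => lEval p w) z := by
  simp only [lEval, Finsupp.sum]
  exact tendsto_finset_sum _ fun n _ =>
    continuousAt_const.mul (continuousAt_zpow₀ z n (Or.inl hz))

/-- Key continuity lemma. -/
lemma key_continuousAt (p b : ℂ → ℝ) (z₀ : ℂ)
    (hp : ContinuousAt p z₀) (hb : ContinuousAt b z₀)
    (h : b z₀ = 0 → 0 < p z₀) :
    ContinuousAt (fun z => if 0 < b z then Real.arctan (p z / b z) else π / 2) z₀ := by
  rcases lt_trichotomy (b z₀) 0 with hneg | hzero | hposb
  · have hev : ∀ᶠ z in nhds z₀, b z < 0 :=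
      hb.eventually_lt continuousAt_const hneg
    refine ContinuousAt.congr (f := fun _ => π / 2) continuousAt_const ?_
    filter_upwards [hev] with z hz
    simp [not_lt.mpr hz.le]
  · -- b z₀ = 0, p z₀ > 0 : limit is π/2
    have hp0 : 0 < p z₀ := h hzero
    have hval : (if 0 < b z₀ then Real.arctan (p z₀ / b z₀) else π / 2) = π / 2 := by
      simp [hzero]
    apply continuousAt_of_tendsto_nhds (y := π / 2)
    rw [tendsto_order]
    constructor
    · intro c hc
      set c' : ℝ := max c 0 with hc'
      have hc'lt : c' < π / 2 := max_lt hc (by positivity)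
      have hc'ge : (0:ℝ) ≤ c' := le_max_right _ _
      set M : ℝ := max (Real.tan c') 0 + 1 with hM
      have hMpos : 0 < M := by
        have : (0:ℝ) ≤ max (Real.tan c') 0 := le_max_right _ _
        linarith
      have htanM : Real.tan c' < M := by
        have : Real.tan c' ≤ max (Real.tan c') 0 := le_max_left _ _
        linarith
      have hq : 0 < p z₀ / 2 := by linarith
      have hev1 : ∀ᶠ z in nhds z₀, p z₀ / 2 < p z :=
        continuousAt_const.eventually_lt hp (by linarith)
      have hev2 : ∀ᶠ z in nhds z₀, b z < (p z₀ / 2) / M := by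
        refine hb.eventually_lt continuousAt_const ?_
        rw [hzero]; positivity
      filter_upwards [hev1, hev2] with z h1 h2
      by_cases hbz : 0 < b z
      · rw [if_pos hbz]
        have hMlt : M < p z / b z := by
          rw [lt_div_iff₀ hbz]
          calc M * b z < M * ((p z₀ / 2) / M) := mul_lt_mul_of_pos_left h2 hMpos
            _ = p z₀ / 2 := by field_simp
            _ < p z := h1
        have harc : c' < Real.arctan (p z / b z) := by
          calc c' = Real.arctan (Real.tan c') :=
                (Real.arctan_tan (by linarith [Real.pi_div_two_pos]) hc'lt).symm
            _ < Real.arctan (p z / b z) :=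
                Real.arctan_strictMono (lt_trans htanM hMlt)
        exact lt_of_le_of_lt (le_max_left c 0) harc
      · rw [if_neg hbz]
        exact hc
    · intro c hc
      refine Filter.Eventually.of_forall fun z => ?_
      by_cases hbz : 0 < b z
      · rw [if_pos hbz]
        exact lt_trans (Real.arctan_lt_pi_div_two _) hc
      · rw [if_neg hbz]
        exact hc
  · have hev : ∀ᶠ z in nhds z₀, 0 < b z :=
      continuousAt_const.eventually_lt hb hposb
    refine ContinuousAt.congr
      (f := fun z => Real.arctan (p z / b z))
      (Real.continuous_arctan.continuousAt.comp (hp.div hb hposb.ne')) ?_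
    filter_upwards [hev] with z hz
    simp [hz]

/-- In the setting of the Bezout identity `P̃A + Q̃B = 1` with `A`, `B` palindromic
and coprime, and at least one of `A(z)`, `B(z)` positive at each point of `S¹`,
the functions `arctan ∘ γ_max` and `arctan ∘ γ_min` are continuous on `S¹`. -/
theorem arctan_gamma_continuous
    (A B Pt Qt : LaurentPolynomial ℝ)
    (hA : Palindromic A) (hB : Palindromic B)
    (hPt : Palindromic Pt) (hQt : Palindromic Qt)
    (hcop : IsCoprime A B)
    (hbez : Pt * A + Qt * B = 1)
    (hpos : ∀ z : ℂ, ‖z‖ = 1 → 0 < (lEval A z).re ∨ 0 < (lEval B z).re) :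
    Continuous (fun z : Metric.sphere (0 : ℂ) 1 => arctanGammaMax Pt B z) ∧
    Continuous (fun z : Metric.sphere (0 : ℂ) 1 => arctanGammaMin Qt A z) := by
  constructor
  · rw [continuous_iff_continuousAt]
    rintro ⟨z₀, hz₀⟩
    have hz₀n : ‖z₀‖ = 1 := by simpa using hz₀
    have hz0 : z₀ ≠ 0 := by intro h; simp [h] at hz₀n
    have hF : ContinuousAt (fun z => arctanGammaMax Pt B z) z₀ := by
      unfold arctanGammaMax
      apply key_continuousAt (fun z => (lEval Pt z).re) (fun z => (lEval B z).re) z₀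
        (Complex.continuous_re.continuousAt.comp (lEval_continuousAt Pt hz0))
        (Complex.continuous_re.continuousAt.comp (lEval_continuousAt B hz0))
      intro hB0
      have hBz : lEval B z₀ = 0 := Complex.ext hB0 (lEval_real hB hz₀n)
      have hA0 : 0 < (lEval A z₀).re :=
        (hpos z₀ hz₀n).resolve_right (by rw [hB0]; exact lt_irrefl 0)
      have hbz := lEval_bezout hbez z₀ hz0
      rw [hBz, mul_zero, add_zero] at hbz
      have him : (lEval Pt z₀).im = 0 := lEval_real hPt hz₀n
      have himA : (lEval A z₀).im = 0 := lEval_real hA hz₀n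
      have hre : (lEval Pt z₀).re * (lEval A z₀).re = 1 := by
        have := congrArg Complex.re hbz
        simpa [Complex.mul_re, him, himA] using this
      rcases mul_pos_iff.mp (hre ▸ one_pos) with ⟨h1, _⟩ | ⟨_, h2⟩
      · exact h1
      · linarith
    exact hF.comp (x := ⟨z₀, hz₀⟩) continuous_subtype_val.continuousAt
  · have hrw : ∀ z : ℂ, arctanGammaMin Qt A z =
        -(if 0 < (lEval A z).re then
            Real.arctan ((lEval Qt z).re / (lEval A z).re) else π / 2) := by
      intro z
      unfold arctanGammaMin
      split_ifs with hcond
      · rw [neg_div, Real.arctan_neg]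
      · ring
    simp only [hrw]
    apply Continuous.neg
    rw [continuous_iff_continuousAt]
    rintro ⟨z₀, hz₀⟩
    have hz₀n : ‖z₀‖ = 1 := by simpa using hz₀
    have hz0 : z₀ ≠ 0 := by intro h; simp [h] at hz₀n
    have hF : ContinuousAt (fun z : ℂ => if 0 < (lEval A z).re then
        Real.arctan ((lEval Qt z).re / (lEval A z).re) else π / 2) z₀ := by
      apply key_continuousAt (fun z => (lEval Qt z).re) (fun z => (lEval A z).re) z₀
        (Complex.continuous_re.continuousAt.comp (lEval_continuousAt Qt hz0))
        (Complex.continuous_re.continuousAt.comp (lEval_continuousAt A hz0))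
      intro hA0
      have hAz : lEval A z₀ = 0 := Complex.ext hA0 (lEval_real hA hz₀n)
      have hB0 : 0 < (lEval B z₀).re :=
        (hpos z₀ hz₀n).resolve_left (by rw [hA0]; exact lt_irrefl 0)
      have hbz := lEval_bezout hbez z₀ hz0
      rw [hAz, mul_zero, zero_add] at hbz
      have him : (lEval Qt z₀).im = 0 := lEval_real hQt hz₀n
      have himB : (lEval B z₀).im = 0 := lEval_real hB hz₀n
      have hre : (lEval Qt z₀).re * (lEval B z₀).re = 1 := by
        have := congrArg Complex.re hbz
        simpa [Complex.mul_re, him, himB] using this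
      rcases mul_pos_iff.mp (hre ▸ one_pos) with ⟨h1, _⟩ | ⟨_, h2⟩
      · exact h1
      · linarith
    exact hF.comp (x := ⟨z₀, hz₀⟩) continuous_subtype_val.continuousAt
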